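/- Let ν be a valuation on K[x], let Q ∈ K[x] be an (abstract) key polynomial for ν, and let f ∈ K[x] be a non-constant polynomial with ε(f) < ε(Q). Write the division with remainder f = a + qQ in K[x] with deg a < deg Q. Then ν(f) = ν(a) < ν(qQ). -/

import Mathlib

open Polynomial

namespace KeyPolPaper

variable {K : Type*} [Field K] {Λ : Type*} [AddCommGroup Λ] [LinearOrder Λ] [IsOrderedAddMonoid Λ]

/-- A valuation on `F[X]` with values in `Λ ∪ {∞}`: multiplicative, satisfies the
ultrametric inequality, and is finite on nonzero constants. -/
def IsValuation {F : Type*} [Field F] (w : F[X] → WithTop Λ) : Prop :=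
  w 0 = ⊤ ∧ (∀ f g : F[X], w (f * g) = w f + w g) ∧
    (∀ f g : F[X], min (w f) (w g) ≤ w (f + g)) ∧
    ∀ a : F, a ≠ 0 → w (C a) ≠ ⊤

/-- `μ ≤ ν` for valuations on `K[X]`. -/
def ValLE (μ ν : K[X] → WithTop Λ) : Prop := ∀ f : K[X], μ f ≤ ν f

/-- `μ < ν` for valuations on `K[X]`. -/
def ValLT (μ ν : K[X] → WithTop Λ) : Prop := ValLE μ ν ∧ μ ≠ ν

/-- ν-equivalence: `f ∼_ν g` iff `ν (f - g) > ν f`. -/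
def VEquiv (ν : K[X] → WithTop Λ) (f g : K[X]) : Prop := ν f < ν (f - g)

/-- ν-divisibility: `h ∣_ν g` iff `g ∼_ν q * h` for some `q`. -/
def VDvd (ν : K[X] → WithTop Λ) (h g : K[X]) : Prop := ∃ q : K[X], VEquiv ν g (q * h)

/-- MacLane–Vaquié key polynomial: monic, ν-minimal and ν-irreducible. -/
def IsMLVKey (ν : K[X] → WithTop Λ) (φ : K[X]) : Prop :=
  φ.Monic ∧ (∀ f : K[X], f ≠ 0 → f.natDegree < φ.natDegree → ¬ VDvd ν φ f) ∧
    ¬ VDvd ν φ 1 ∧ ∀ f g : K[X], VDvd ν φ (f * g) → VDvd ν φ f ∨ VDvd ν φ g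

/-- `e` is the value `ε(f) = max_{b ≥ 1} (ν f - ν (∂_b f)) / b`; phrased multiplicatively,
`e` satisfies `ν f ≤ ν (∂_b f) + b • e` for all `b ≥ 1`, with equality for some `b ≥ 1`.
If `ν f = ∞` then `ε(f) = ∞`. -/
def IsEps (ν : K[X] → WithTop Λ) (f : K[X]) (e : WithTop Λ) : Prop :=
  (ν f = ⊤ ∧ e = ⊤) ∨
    (ν f ≠ ⊤ ∧ (∀ b : ℕ, 1 ≤ b → ν f ≤ ν (hasseDeriv b f) + b • e) ∧
      ∃ b : ℕ, 1 ≤ b ∧ ν f = ν (hasseDeriv b f) + b • e)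

/-- The invariant `ε(f)`; well defined (for non-constant `f`) since `Λ` is divisible and
the defining property determines `e` uniquely. -/
noncomputable def eps (ν : K[X] → WithTop Λ) (f : K[X]) : WithTop Λ :=
  letI := Classical.propDecidable (∃ e : WithTop Λ, IsEps ν f e)
  if h : ∃ e : WithTop Λ, IsEps ν f e then h.choose else ⊤

/-- The set `I(f)` of indices `b ≥ 1` with `ν (∂_b f) = ν f - b • ε(f)`. -/
def epsAttain (ν : K[X] → WithTop Λ) (f : K[X]) : Set ℕ :=
  {b : ℕ | 1 ≤ b ∧ ν f = ν (hasseDeriv b f) + b • eps ν f}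

/-- Abstract key polynomial for `ν`. -/
def IsKeyPoly (ν : K[X] → WithTop Λ) (Q : K[X]) : Prop :=
  Q.Monic ∧ 0 < Q.natDegree ∧
    ∀ f : K[X], 0 < f.natDegree → f.natDegree < Q.natDegree → eps ν f < eps ν Q

/-- The `s`-th coefficient of the canonical `Q`-expansion `f = Σ_s a_s Q^s`,
`deg a_s < deg Q`. -/
noncomputable def qCoeff (Q f : K[X]) (s : ℕ) : K[X] := ((· /ₘ Q)^[s] f) %ₘ Q

/-- The truncation `ν_Q (f) = min_s ν (a_s Q^s)`. -/
noncomputable def trunc (ν : K[X] → WithTop Λ) (Q f : K[X]) : WithTop Λ :=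
  (Finset.range (f.natDegree + 1)).inf fun s => ν (qCoeff Q f s * Q ^ s)

/-- `S_{ν,Q}(f)`: the set of indices attaining the minimum in `ν_Q(f)`. -/
def attain (ν : K[X] → WithTop Λ) (Q f : K[X]) : Set ℕ :=
  {s : ℕ | ν (qCoeff Q f s * Q ^ s) = trunc ν Q f}

/-- The augmented valuation `[μ; φ, γ] (f) = min_s (μ (a_s) + s • γ)` on φ-expansions. -/
noncomputable def augVal (μ : K[X] → WithTop Λ) (φ : K[X]) (γ : WithTop Λ) (f : K[X]) :
    WithTop Λ :=
  (Finset.range (f.natDegree + 1)).inf fun s => μ (qCoeff φ f s) + s • γ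

/-- `Φ_{μ,ν}`: monic polynomials of minimal degree with `μ φ < ν φ`. -/
def PhiSet (μ ν : K[X] → WithTop Λ) : Set K[X] :=
  {φ : K[X] | φ.Monic ∧ μ φ < ν φ ∧
    ∀ ψ : K[X], ψ.Monic → μ ψ < ν ψ → φ.natDegree ≤ ψ.natDegree}

/-- `mult f`: the least `b ≥ 1` with `∂_b f ≠ 0`. -/
noncomputable def multOf (f : K[X]) : ℕ := sInf {b : ℕ | 1 ≤ b ∧ hasseDeriv b f ≠ 0}

/-- Abstract limit key polynomial for `ν` (conditions (K1)-(K4)). -/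
def IsLimitKeyPoly (ν : K[X] → WithTop Λ) (Q : K[X]) : Prop :=
  Q.Monic ∧
    ∃ Qm : K[X], IsKeyPoly ν Qm ∧ ValLT (trunc ν Qm) ν ∧
      (∃ χ ∈ PhiSet (trunc ν Qm) ν, Qm.natDegree = χ.natDegree) ∧
      (∀ χ ∈ PhiSet (trunc ν Qm) ν, ∃ χ' ∈ PhiSet (trunc ν Qm) ν, ν χ < ν χ') ∧
      (∀ χ ∈ PhiSet (trunc ν Qm) ν, trunc ν χ Q < ν Q) ∧
      ∀ Q' : K[X], Q'.Monic →
        (∀ χ ∈ PhiSet (trunc ν Qm) ν, trunc ν χ Q' < ν Q') → Q.natDegree ≤ Q'.natDegree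

/-- A continuous MacLane chain of stable degree `m`: valuations `ρ_0 < ρ_1 < ⋯`,
monic key polynomials `χ_i` (for `i ≥ 1`) of degree `m`, with
`ρ_i = [ρ_{i-1}; χ_i, β_i]`, `β_i = ρ_i (χ_i) > ρ_{i-1} (χ_i)` and
`χ_{i+1} ∤_{ρ_i} χ_i`. -/
structure MacLaneChain (K : Type*) [Field K] (Λ : Type*) [AddCommGroup Λ] [LinearOrder Λ] [IsOrderedAddMonoid Λ] where
  m : ℕ
  hm : 0 < m
  ρ : ℕ → K[X] → WithTop Λ
  χ : ℕ → K[X]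
  β : ℕ → Λ
  isVal : ∀ i : ℕ, IsValuation (ρ i)
  mono : ∀ i : ℕ, ValLT (ρ i) (ρ (i + 1))
  monicChi : ∀ i : ℕ, (χ (i + 1)).Monic
  degChi : ∀ i : ℕ, (χ (i + 1)).natDegree = m
  keyChi : ∀ i : ℕ, IsMLVKey (ρ i) (χ (i + 1))
  beta_def : ∀ i : ℕ, ρ (i + 1) (χ (i + 1)) = (β (i + 1) : WithTop Λ)
  beta_lt : ∀ i : ℕ, ρ i (χ (i + 1)) < (β (i + 1) : WithTop Λ)
  aug : ∀ i : ℕ, ρ (i + 1) = augVal (ρ i) (χ (i + 1)) (β (i + 1) : WithTop Λ)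
  not_dvd : ∀ i : ℕ, ¬ VDvd (ρ (i + 1)) (χ (i + 2)) (χ (i + 1))

/-- A polynomial is stable w.r.t. the chain if its values `ρ_i f` are eventually constant. -/
def MacLaneChain.Stable (ch : MacLaneChain K Λ) (f : K[X]) : Prop :=
  ∃ i0 : ℕ, ∀ i : ℕ, i0 ≤ i → ch.ρ i f = ch.ρ i0 f

/-- The chain is essential: non-stable polynomials exist and all have degree `> m`. -/
def MacLaneChain.Essential (ch : MacLaneChain K Λ) : Prop :=
  (∃ f : K[X], ¬ ch.Stable f) ∧ ∀ f : K[X], ¬ ch.Stable f → ch.m < f.natDegree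

/-- MLV limit key polynomials of the chain: monic non-stable polynomials of minimal
degree `m_∞`. -/
def MacLaneChain.IsLimKP (ch : MacLaneChain K Λ) (φ : K[X]) : Prop :=
  φ.Monic ∧ ¬ ch.Stable φ ∧ ∀ f : K[X], ¬ ch.Stable f → φ.natDegree ≤ f.natDegree

/-- Convex subgroup of a linearly ordered abelian group. -/
def IsConvexSubgroup (H : AddSubgroup Λ) : Prop :=
  ∀ x y : Λ, 0 < x → x < y → y ∈ H → x ∈ H

/-- The value group of a valuation: the subgroup of `Λ` generated by the finite values. -/
def valueGroup {F : Type*} [Field F] (ρ : F[X] → WithTop Λ) : AddSubgroup Λ :=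
  AddSubgroup.closure {γ : Λ | ∃ f : F[X], ρ f = (γ : WithTop Λ)}


variable [Module ℚ Λ]

/-! ### Auxiliary lemmas -/

section Aux

variable {ν : K[X] → WithTop Λ}

lemma coe_nsmul' (b : ℕ) (e : Λ) : (b • (e : WithTop Λ)) = ((b • e : Λ) : WithTop Λ) := by
  induction b with
  | zero => simp
  | succ n ih => rw [succ_nsmul, succ_nsmul, ih, WithTop.coe_add]

lemma nsmul_top_eq {b : ℕ} (hb : b ≠ 0) : (b • (⊤ : WithTop Λ)) = ⊤ := by
  cases b with
  | zero => exact absurd rfl hb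
  | succ n => rw [succ_nsmul]; exact add_top _

lemma nsmul_coe_lt_nsmul_coe {e1 e2 : Λ} {b : ℕ} (hb : b ≠ 0) (h : e1 < e2) :
    (b • (e1 : WithTop Λ)) < b • (e2 : WithTop Λ) := by
  rw [coe_nsmul', coe_nsmul', WithTop.coe_lt_coe]
  exact nsmul_lt_nsmul_right hb h

lemma IsValuation.v_one (hν : IsValuation ν) : ν 1 = 0 := by
  have h := hν.2.1 1 1
  rw [one_mul] at h
  have h1 : ν 1 ≠ ⊤ := by simpa using hν.2.2.2 1 one_ne_zero
  lift ν 1 to Λ using h1 with x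
  rw [← WithTop.coe_add, WithTop.coe_inj] at h
  have hx : x + x = x + 0 := by rw [add_zero]; exact h.symm
  have : x = 0 := add_left_cancel hx
  exact_mod_cast this

lemma IsValuation.v_neg (hν : IsValuation ν) (g : K[X]) : ν (-g) = ν g := by
  have hm : (-g : K[X]) = C (-1) * g := by rw [map_neg, map_one, neg_one_mul]
  have hC : ν (C (-1 : K)) = 0 := by
    have h1 : ν (C (-1 : K)) ≠ ⊤ := hν.2.2.2 (-1) (by norm_num)
    have h2 : ν (C (-1 : K) * C (-1 : K)) = ν (C (-1 : K)) + ν (C (-1 : K)) :=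
      hν.2.1 _ _
    rw [← map_mul, neg_one_mul, neg_neg, map_one, hν.v_one] at h2
    lift ν (C (-1 : K)) to Λ using h1 with y
    have h3 : y + y = 0 := by exact_mod_cast h2.symm
    have h4 : y = 0 := by
      rcases lt_trichotomy y 0 with h | h | h
      · have h5 := add_lt_add h h
        rw [h3, add_zero] at h5
        exact absurd h5 (lt_irrefl 0)
      · exact h
      · have h5 := add_lt_add h h
        rw [h3, add_zero] at h5
        exact absurd h5 (lt_irrefl 0)
    exact_mod_cast h4
  rw [hm, hν.2.1, hC, zero_add]

lemma IsValuation.v_add_eq (hν : IsValuation ν) {f g : K[X]} (h : ν f < ν g) :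
    ν (f + g) = ν f := by
  refine le_antisymm ?_ (by simpa [min_eq_left h.le] using hν.2.2.1 f g)
  by_contra h'
  push_neg at h'
  have h2 := hν.2.2.1 (f + g) (-g)
  rw [add_neg_cancel_right, hν.v_neg] at h2
  exact absurd h2 (not_le.mpr (lt_min h' h))

lemma IsValuation.v_sum_lt (hν : IsValuation ν) {ι : Type*} {s : Finset ι} {g : ι → K[X]}
    {x : WithTop Λ} (hx : x ≠ ⊤) (h : ∀ i ∈ s, x < ν (g i)) :
    x < ν (∑ i ∈ s, g i) := by
  classical
  induction s using Finset.induction with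
  | empty => simpa [hν.1] using lt_top_iff_ne_top.mpr hx
  | @insert a s ha ih =>
    rw [Finset.sum_insert ha]
    refine lt_of_lt_of_le ?_ (hν.2.2.1 _ _)
    exact lt_min (h a (Finset.mem_insert_self a s))
      (ih fun i hi => h i (Finset.mem_insert_of_mem hi))

lemma IsValuation.v_sum_eq (hν : IsValuation ν) {ι : Type*} {s : Finset ι} {g : ι → K[X]}
    {i0 : ι} (hi0 : i0 ∈ s) (hne : ν (g i0) ≠ ⊤)
    (h : ∀ i ∈ s, i ≠ i0 → ν (g i0) < ν (g i)) :
    ν (∑ i ∈ s, g i) = ν (g i0) := by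
  classical
  rw [← Finset.add_sum_erase s g hi0]
  exact hν.v_add_eq (hν.v_sum_lt hne fun i hi =>
    h i (Finset.mem_of_mem_erase hi) (Finset.ne_of_mem_erase hi))

lemma isEps_eps {f : K[X]} (h : ∃ e : WithTop Λ, IsEps ν f e) :
    IsEps ν f (eps ν f) := by
  unfold eps
  rw [dif_pos h]
  exact h.choose_spec

lemma eps_eq_top_of_not_exists {f : K[X]} (h : ¬ ∃ e : WithTop Λ, IsEps ν f e) :
    eps ν f = ⊤ := by
  unfold eps
  rw [dif_neg h]

/-- From `eps ν f ≠ ⊤` extract the basic inequalities. -/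
lemma eps_pack' (hν : IsValuation ν) {f : K[X]} (hne : eps ν f ≠ ⊤) :
    ∃ e : Λ, eps ν f = ↑e ∧ ν f ≠ ⊤ ∧
      ∀ j : ℕ, 1 ≤ j → ν f ≤ ν (hasseDeriv j f) + j • (e : WithTop Λ) := by
  have hex : ∃ e, IsEps ν f e := by
    by_contra h; exact hne (eps_eq_top_of_not_exists h)
  rcases isEps_eps hex with ⟨-, h2⟩ | ⟨h1, h2, -⟩
  · exact absurd h2 hne
  · obtain ⟨e, he⟩ := WithTop.ne_top_iff_exists.mp hne
    exact ⟨e, he.symm, h1, fun j hj => he ▸ h2 j hj⟩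

/-- Existence of `ε(f)` for non-constant `f` with `ν f ≠ ⊤`, using divisibility of `Λ`. -/
lemma exists_isEps (hν : IsValuation ν) {f : K[X]} (hd : 0 < f.natDegree) (hf : ν f ≠ ⊤) :
    ∃ e : Λ, IsEps ν f (e : WithTop Λ) := by
  classical
  obtain ⟨F, hF⟩ := WithTop.ne_top_iff_exists.mp hf
  set n := f.natDegree with hn
  have hfne : f ≠ 0 := fun h => by simp [h, hn] at hd
  have hlead : hasseDeriv n f = C (f.coeff n) := by
    ext m
    rw [hasseDeriv_coeff, coeff_C]
    cases m with
    | zero => simp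
    | succ m =>
      simp [coeff_eq_zero_of_natDegree_lt (show f.natDegree < m + 1 + n by omega)]
  have hDn : ν (hasseDeriv n f) ≠ ⊤ := by
    rw [hlead]
    exact hν.2.2.2 _ (by rwa [← leadingCoeff, leadingCoeff_ne_zero])
  set S : Finset ℕ :=
    (Finset.range (n + 1)).filter (fun b => 1 ≤ b ∧ ν (hasseDeriv b f) ≠ ⊤) with hS
  have hnS : n ∈ S := by
    rw [hS, Finset.mem_filter, Finset.mem_range]
    exact ⟨by omega, hd, hDn⟩
  have hSne : S.Nonempty := ⟨n, hnS⟩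
  set c : ℕ → Λ := fun b => (b : ℚ)⁻¹ • (F - WithTop.untopD 0 (ν (hasseDeriv b f))) with hc
  set e := S.sup' hSne c with he
  have smul_c : ∀ b ∈ S, ∀ D : Λ, ν (hasseDeriv b f) = ↑D → b • c b = F - D := by
    intro b hb D hD
    have hb1 : 1 ≤ b := ((Finset.mem_filter.mp hb).2).1
    have hbQ : (b : ℚ) ≠ 0 := Nat.cast_ne_zero.mpr (by omega)
    rw [hc]
    simp only [hD, WithTop.untopD_coe]
    rw [← Nat.cast_smul_eq_nsmul ℚ, smul_smul, mul_inv_cancel₀ hbQ, one_smul]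
  refine ⟨e, Or.inr ⟨hf, ?_, ?_⟩⟩
  · intro b hb
    by_cases hD : ν (hasseDeriv b f) = ⊤
    · rw [hD, top_add]; exact le_top
    · have hbn : b ≤ n := by
        by_contra hbn
        exact hD (by rw [hasseDeriv_eq_zero_of_lt_natDegree f b (by omega)]; exact hν.1)
      have hbS : b ∈ S := by
        rw [hS, Finset.mem_filter, Finset.mem_range]
        exact ⟨by omega, hb, hD⟩
      obtain ⟨D, hDD⟩ := WithTop.ne_top_iff_exists.mp hD
      have h1 : b • c b = F - D := smul_c b hbS D hDD.symm
      have h3 : b • c b ≤ b • e := nsmul_le_nsmul_right (Finset.le_sup' c hbS) b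
      rw [← hDD, ← hF, coe_nsmul', ← WithTop.coe_add, WithTop.coe_le_coe]
      have hFD : F = D + b • c b := by rw [h1]; abel
      rw [hFD]
      exact add_le_add_right h3 D
  · obtain ⟨b, hbS, hbe⟩ := Finset.exists_mem_eq_sup' hSne c
    have hD : ν (hasseDeriv b f) ≠ ⊤ := ((Finset.mem_filter.mp hbS).2).2
    obtain ⟨D, hDD⟩ := WithTop.ne_top_iff_exists.mp hD
    refine ⟨b, ((Finset.mem_filter.mp hbS).2).1, ?_⟩
    have h1 : b • c b = F - D := smul_c b hbS D hDD.symm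
    rw [← hDD, ← hF, coe_nsmul', ← WithTop.coe_add, WithTop.coe_inj, he, hbe, h1]
    abel

/-- Full package: `eps ν f` is finite, satisfies the inequalities (including `j = 0`),
and is attained at a maximal index `m`, beyond which the inequality is strict. -/
lemma eps_pack (hν : IsValuation ν) {f : K[X]} (hd : 0 < f.natDegree) (hf : ν f ≠ ⊤) :
    ∃ e : Λ, eps ν f = ↑e ∧
      (∀ j : ℕ, ν f ≤ ν (hasseDeriv j f) + j • (e : WithTop Λ)) ∧
      ∃ m : ℕ, 1 ≤ m ∧ ν f = ν (hasseDeriv m f) + m • (e : WithTop Λ) ∧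
        ∀ i : ℕ, m < i → ν f < ν (hasseDeriv i f) + i • (e : WithTop Λ) := by
  classical
  obtain ⟨e0, he0⟩ := exists_isEps hν hd hf
  rcases isEps_eps ⟨_, he0⟩ with ⟨h1, -⟩ | ⟨-, hineq, b0, hb01, hatt⟩
  · exact absurd h1 hf
  · have hetop : eps ν f ≠ ⊤ := by
      intro h
      rw [h, nsmul_top_eq (by omega), add_top] at hatt
      exact hf hatt
    obtain ⟨e, he⟩ := WithTop.ne_top_iff_exists.mp hetop
    rw [← he] at hineq hatt
    have hineq' : ∀ j : ℕ, ν f ≤ ν (hasseDeriv j f) + j • (e : WithTop Λ) := by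
      intro j
      rcases Nat.eq_zero_or_pos j with rfl | hj
      · rw [hasseDeriv_zero', zero_nsmul, add_zero]
      · exact hineq j hj
    set n := f.natDegree with hn
    have hbound : ∀ i : ℕ, n < i → ν f < ν (hasseDeriv i f) + i • (e : WithTop Λ) := by
      intro i hi
      rw [hasseDeriv_eq_zero_of_lt_natDegree f i hi, hν.1, top_add]
      exact lt_top_iff_ne_top.mpr hf
    set A : Finset ℕ := (Finset.range (n + 1)).filter
      (fun b => 1 ≤ b ∧ ν f = ν (hasseDeriv b f) + b • (e : WithTop Λ)) with hA
    have hb0A : b0 ∈ A := by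
      rw [hA, Finset.mem_filter, Finset.mem_range]
      refine ⟨?_, hb01, hatt⟩
      by_contra hb
      exact absurd (hatt.symm.trans_lt (hbound b0 (by omega))) (lt_irrefl _)
    have hAne : A.Nonempty := ⟨b0, hb0A⟩
    set m := A.max' hAne with hm
    have hmA : m ∈ A := A.max'_mem hAne
    obtain ⟨hmr, hm1, hmeq⟩ : m ∈ Finset.range (n + 1) ∧ 1 ≤ m ∧
        ν f = ν (hasseDeriv m f) + m • (e : WithTop Λ) := by
      have := Finset.mem_filter.mp hmA
      exact ⟨this.1, this.2.1, this.2.2⟩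
    refine ⟨e, he.symm, hineq', m, hm1, hmeq, ?_⟩
    intro i hi
    rcases le_or_gt i n with hin | hin
    · have hiA : i ∉ A := fun hiA => absurd (A.le_max' i hiA) (by omega)
      refine lt_of_le_of_ne (hineq' i) ?_
      intro hcon
      exact hiA (by
        rw [hA, Finset.mem_filter, Finset.mem_range]
        exact ⟨by omega, by omega, hcon⟩)
    · exact hbound i hin

/-- Crux: for nonzero `q` and nonconstant `Q` with finite values, there is `b ≥ 1` with
`ν (∂_b (qQ)) + b ε(Q) ≤ ν q + ν Q`. -/
lemma crux (hν : IsValuation ν) {q Q : K[X]} (hq0 : q ≠ 0) (hvq : ν q ≠ ⊤)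
    (hQd : 0 < Q.natDegree) (hvQ : ν Q ≠ ⊤) :
    ∃ b : ℕ, 1 ≤ b ∧ ν (hasseDeriv b (q * Q)) + b • eps ν Q ≤ ν q + ν Q := by
  classical
  obtain ⟨eQ, heQ, hQineq, mQ, hmQ1, hmQeq, hmQlt⟩ := eps_pack hν hQd hvQ
  rw [heQ]
  have hDQ : ν (hasseDeriv mQ Q) ≠ ⊤ := fun h => hvQ (by rw [hmQeq, h, top_add])
  set g : ℕ × ℕ → K[X] := fun ij => hasseDeriv ij.1 q * hasseDeriv ij.2 Q with hg
  have hgv : ∀ ij : ℕ × ℕ, ν (g ij) = ν (hasseDeriv ij.1 q) + ν (hasseDeriv ij.2 Q) :=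
    fun ij => hν.2.1 _ _
  by_cases hqd : q.natDegree = 0
  · -- `q` is a nonzero constant
    refine ⟨mQ, hmQ1, ?_⟩
    have hqc : q = C (q.coeff 0) := Polynomial.eq_C_of_natDegree_eq_zero hqd
    have hder : hasseDeriv mQ (q * Q) = q * hasseDeriv mQ Q := by
      rw [hqc, ← smul_eq_C_mul, ← smul_eq_C_mul, map_smul]
    rw [hder, hν.2.1, hmQeq, add_assoc]
  · have hqd1 : 0 < q.natDegree := Nat.pos_of_ne_zero hqd
    obtain ⟨eq_, heq_, hqineq, mq, hmq1, hmqeq, hmqlt⟩ := eps_pack hν hqd1 hvq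
    have hDq : ν (hasseDeriv mq q) ≠ ⊤ := fun h => hvq (by rw [hmqeq, h, top_add])
    rcases lt_trichotomy eq_ eQ with hlt | heqq | hgt
    · -- ε(q) < ε(Q): use b = mQ, dominant term (0, mQ)
      refine ⟨mQ, hmQ1, ?_⟩
      have hgi0 : ν (g (0, mQ)) = ν q + ν (hasseDeriv mQ Q) := by
        rw [hgv]; simp [hasseDeriv_zero']
      have hTne : ν (g (0, mQ)) ≠ ⊤ := by
        rw [hgi0]; exact WithTop.add_ne_top.mpr ⟨hvq, hDQ⟩
      have hterms : ∀ ij ∈ Finset.HasAntidiagonal.antidiagonal mQ, ij ≠ (0, mQ) →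
          ν (g (0, mQ)) < ν (g ij) := by
        rintro ⟨i, j⟩ hmem hne
        rw [Finset.HasAntidiagonal.mem_antidiagonal] at hmem
        have hi : i ≠ 0 := by rintro rfl; exact hne (by simp [← hmem])
        rw [hgv (i, j)]
        by_cases hA : ν (hasseDeriv i q) = ⊤
        · rw [hA, top_add]; exact lt_top_iff_ne_top.mpr hTne
        by_cases hB : ν (hasseDeriv j Q) = ⊤
        · rw [hB, add_top]; exact lt_top_iff_ne_top.mpr hTne
        have k1 : ν q < ν (hasseDeriv i q) + i • (eQ : WithTop Λ) :=
          lt_of_le_of_lt (hqineq i)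
            (WithTop.add_lt_add_left hA (nsmul_coe_lt_nsmul_coe hi hlt))
        have k2 : ν Q ≤ ν (hasseDeriv j Q) + j • (eQ : WithTop Λ) := hQineq j
        have k3 : ν q + ν Q <
            (ν (hasseDeriv i q) + ν (hasseDeriv j Q)) + (i + j) • (eQ : WithTop Λ) := by
          have := WithTop.add_lt_add_of_lt_of_le hvQ k1 k2
          calc ν q + ν Q < (ν (hasseDeriv i q) + i • (eQ : WithTop Λ)) +
              (ν (hasseDeriv j Q) + j • (eQ : WithTop Λ)) := this
            _ = (ν (hasseDeriv i q) + ν (hasseDeriv j Q)) +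
                (i • (eQ : WithTop Λ) + j • (eQ : WithTop Λ)) := by abel
            _ = _ := by rw [← add_nsmul]
        rw [hmem] at k3
        have k5 : ν q + ν Q = ν (g (0, mQ)) + mQ • (eQ : WithTop Λ) := by
          rw [hgi0, hmQeq]; abel
        rw [k5] at k3
        exact lt_of_add_lt_add_right k3
      have hsum : ν (hasseDeriv mQ (q * Q)) = ν q + ν (hasseDeriv mQ Q) := by
        rw [hasseDeriv_mul, ← hgi0]
        exact hν.v_sum_eq (by simp) hTne hterms
      rw [hsum, add_assoc, ← hmQeq]
    · -- ε(q) = ε(Q): use b = mq + mQ, dominant term (mq, mQ)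
      subst heqq
      refine ⟨mq + mQ, by omega, ?_⟩
      have hgi0 : ν (g (mq, mQ)) = ν (hasseDeriv mq q) + ν (hasseDeriv mQ Q) := hgv _
      have hTne : ν (g (mq, mQ)) ≠ ⊤ := by
        rw [hgi0]; exact WithTop.add_ne_top.mpr ⟨hDq, hDQ⟩
      have hterms : ∀ ij ∈ Finset.HasAntidiagonal.antidiagonal (mq + mQ), ij ≠ (mq, mQ) →
          ν (g (mq, mQ)) < ν (g ij) := by
        rintro ⟨i, j⟩ hmem hne
        rw [Finset.HasAntidiagonal.mem_antidiagonal] at hmem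
        rw [hgv (i, j)]
        have key : ν q + ν Q <
            (ν (hasseDeriv i q) + i • (eq_ : WithTop Λ)) +
            (ν (hasseDeriv j Q) + j • (eq_ : WithTop Λ)) := by
          rcases lt_or_ge mq i with hi | hi
          · exact WithTop.add_lt_add_of_lt_of_le hvQ (hmqlt i hi) (hQineq j)
          · have hj : mQ < j := by
              rcases lt_or_ge mQ j with h | h
              · exact h
              · exfalso
                have : i = mq ∧ j = mQ := by omega
                exact hne (by rw [this.1, this.2])
            exact WithTop.add_lt_add_of_le_of_lt hvq (hqineq i) (hmQlt j hj)
        have k3 : ν q + ν Q <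
            (ν (hasseDeriv i q) + ν (hasseDeriv j Q)) + (i + j) • (eq_ : WithTop Λ) := by
          calc ν q + ν Q < _ := key
            _ = (ν (hasseDeriv i q) + ν (hasseDeriv j Q)) +
                (i • (eq_ : WithTop Λ) + j • (eq_ : WithTop Λ)) := by abel
            _ = _ := by rw [← add_nsmul]
        rw [hmem] at k3
        have k5 : ν q + ν Q = ν (g (mq, mQ)) + (mq + mQ) • (eq_ : WithTop Λ) := by
          rw [hgi0, hmqeq, hmQeq, add_nsmul]; abel
        rw [k5] at k3
        exact lt_of_add_lt_add_right k3
      have hsum : ν (hasseDeriv (mq + mQ) (q * Q)) =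
          ν (hasseDeriv mq q) + ν (hasseDeriv mQ Q) := by
        rw [hasseDeriv_mul, ← hgi0]
        exact hν.v_sum_eq (by rw [Finset.HasAntidiagonal.mem_antidiagonal]) hTne hterms
      rw [hsum]
      have : (ν (hasseDeriv mq q) + ν (hasseDeriv mQ Q)) + (mq + mQ) • (eq_ : WithTop Λ)
          = ν q + ν Q := by
        rw [hmqeq, hmQeq, add_nsmul]; abel
      exact le_of_eq this
    · -- ε(Q) < ε(q): use b = mq, dominant term (mq, 0)
      refine ⟨mq, hmq1, ?_⟩
      have hgi0 : ν (g (mq, 0)) = ν (hasseDeriv mq q) + ν Q := by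
        rw [hgv]; simp [hasseDeriv_zero']
      have hTne : ν (g (mq, 0)) ≠ ⊤ := by
        rw [hgi0]; exact WithTop.add_ne_top.mpr ⟨hDq, hvQ⟩
      have hterms : ∀ ij ∈ Finset.HasAntidiagonal.antidiagonal mq, ij ≠ (mq, 0) →
          ν (g (mq, 0)) < ν (g ij) := by
        rintro ⟨i, j⟩ hmem hne
        rw [Finset.HasAntidiagonal.mem_antidiagonal] at hmem
        have hj : j ≠ 0 := by
          intro hj0
          apply hne
          have hieq : i = mq := by omega
          rw [hieq, hj0]
        rw [hgv (i, j)]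
        by_cases hA : ν (hasseDeriv i q) = ⊤
        · rw [hA, top_add]; exact lt_top_iff_ne_top.mpr hTne
        by_cases hB : ν (hasseDeriv j Q) = ⊤
        · rw [hB, add_top]; exact lt_top_iff_ne_top.mpr hTne
        have k1 : ν Q < ν (hasseDeriv j Q) + j • (eq_ : WithTop Λ) :=
          lt_of_le_of_lt (hQineq j)
            (WithTop.add_lt_add_left hB (nsmul_coe_lt_nsmul_coe hj hgt))
        have k2 : ν q ≤ ν (hasseDeriv i q) + i • (eq_ : WithTop Λ) := hqineq i
        have k3 : ν q + ν Q <
            (ν (hasseDeriv i q) + ν (hasseDeriv j Q)) + (i + j) • (eq_ : WithTop Λ) := by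
          have := WithTop.add_lt_add_of_le_of_lt hvq k2 k1
          calc ν q + ν Q < (ν (hasseDeriv i q) + i • (eq_ : WithTop Λ)) +
              (ν (hasseDeriv j Q) + j • (eq_ : WithTop Λ)) := this
            _ = (ν (hasseDeriv i q) + ν (hasseDeriv j Q)) +
                (i • (eq_ : WithTop Λ) + j • (eq_ : WithTop Λ)) := by abel
            _ = _ := by rw [← add_nsmul]
        rw [hmem] at k3
        have k5 : ν q + ν Q = ν (g (mq, 0)) + mq • (eq_ : WithTop Λ) := by
          rw [hgi0, hmqeq]; abel
        rw [k5] at k3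
        exact lt_of_add_lt_add_right k3
      have hsum : ν (hasseDeriv mq (q * Q)) = ν (hasseDeriv mq q) + ν Q := by
        rw [hasseDeriv_mul, ← hgi0]
        exact hν.v_sum_eq (by simp) hTne hterms
      rw [hsum]
      calc (ν (hasseDeriv mq q) + ν Q) + mq • (eQ : WithTop Λ)
          ≤ (ν (hasseDeriv mq q) + ν Q) + mq • (eq_ : WithTop Λ) := by
            refine add_le_add_right ?_ _
            rw [coe_nsmul', coe_nsmul', WithTop.coe_le_coe]
            exact nsmul_le_nsmul_right hgt.le mq
        _ = ν q + ν Q := by rw [hmqeq]; abel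

end Aux

/-- if `Q` is a key polynomial for `ν` and `ε(f) < ε(Q)`, then writing
`f = a + q Q` with `deg a < deg Q`, one has `ν f = ν a < ν (q Q)`. -/
theorem stmt2 (ν : K[X] → WithTop Λ) (hν : IsValuation ν)
    (Q : K[X]) (hQ : IsKeyPoly ν Q)
    (f : K[X]) (hf : 0 < f.natDegree) (hef : eps ν f < eps ν Q) :
    ν f = ν (f %ₘ Q) ∧ ν (f %ₘ Q) < ν (f /ₘ Q * Q) := by
  have hQm : Q.Monic := hQ.1
  have hQdeg : 0 < Q.natDegree := hQ.2.1
  have hfa : f %ₘ Q + f /ₘ Q * Q = f := by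
    rw [mul_comm]; exact modByMonic_add_div f Q
  have hefne : eps ν f ≠ ⊤ := (hef.trans_le le_top).ne
  obtain ⟨ef, hefeq, hvf, hfineq⟩ := eps_pack' hν hefne
  have claim : ν (f %ₘ Q) < ν (f /ₘ Q * Q) := by
    by_contra hc
    push_neg at hc
    have hmin : ν (f /ₘ Q * Q) ≤ ν f := by
      have h2 := hν.2.2.1 (f %ₘ Q) (f /ₘ Q * Q)
      rw [hfa] at h2
      exact le_trans (le_min hc le_rfl) h2
    have hqQne : ν (f /ₘ Q * Q) ≠ ⊤ := fun h => hvf (top_le_iff.mp (h ▸ hmin))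
    have hmul : ν (f /ₘ Q * Q) = ν (f /ₘ Q) + ν Q := hν.2.1 _ _
    obtain ⟨hvqne, hvQne⟩ := WithTop.add_ne_top.mp (hmul ▸ hqQne)
    have hq0 : f /ₘ Q ≠ 0 := fun h => hvqne (by rw [h]; exact hν.1)
    obtain ⟨b, hb1, hble⟩ := crux hν hq0 hvqne hQdeg hvQne
    rw [← hmul] at hble
    have hbQtop : ν (hasseDeriv b (f /ₘ Q * Q)) + b • eps ν Q ≠ ⊤ :=
      fun h => hqQne (top_le_iff.mp (h ▸ hble))
    obtain ⟨hD, hbe⟩ := WithTop.add_ne_top.mp hbQtop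
    have heQne : eps ν Q ≠ ⊤ := fun h => hbe (by rw [h]; exact nsmul_top_eq (by omega))
    obtain ⟨eQ, heQ⟩ := WithTop.ne_top_iff_exists.mp heQne
    have hstep : ν (hasseDeriv b (f /ₘ Q * Q)) < ν (hasseDeriv b (f %ₘ Q)) := by
      by_cases had : (f %ₘ Q).natDegree = 0
      · have hz : hasseDeriv b (f %ₘ Q) = 0 := by
          rw [Polynomial.eq_C_of_natDegree_eq_zero had, hasseDeriv_C b _ (by omega)]
        rw [hz, hν.1]
        exact lt_top_iff_ne_top.mpr hD
      · have hadpos : 0 < (f %ₘ Q).natDegree := Nat.pos_of_ne_zero had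
        have ha0 : f %ₘ Q ≠ 0 := fun h => by simp [h] at hadpos
        have haQ : (f %ₘ Q).natDegree < Q.natDegree :=
          natDegree_lt_natDegree ha0 (degree_modByMonic_lt f hQm)
        have hkey : eps ν (f %ₘ Q) < eps ν Q := hQ.2.2 _ hadpos haQ
        have hane : eps ν (f %ₘ Q) ≠ ⊤ := (hkey.trans_le le_top).ne
        obtain ⟨ea, heaeq, hvane, haineq⟩ := eps_pack' hν hane
        have hea_lt : ea < eQ := by
          rw [heaeq, ← heQ, WithTop.coe_lt_coe] at hkey
          exact hkey
        by_contra hcon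
        push_neg at hcon
        have c1 : ν (f %ₘ Q) ≤ ν (hasseDeriv b (f %ₘ Q)) + b • (ea : WithTop Λ) :=
          haineq b hb1
        have c2 : ν (hasseDeriv b (f %ₘ Q)) + b • (ea : WithTop Λ) ≤
            ν (hasseDeriv b (f /ₘ Q * Q)) + b • (ea : WithTop Λ) :=
          add_le_add_left hcon _
        have c3 : ν (hasseDeriv b (f /ₘ Q * Q)) + b • (ea : WithTop Λ) <
            ν (hasseDeriv b (f /ₘ Q * Q)) + b • (eQ : WithTop Λ) :=
          WithTop.add_lt_add_left hD (nsmul_coe_lt_nsmul_coe (by omega) hea_lt)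
        have c4 : ν (hasseDeriv b (f /ₘ Q * Q)) + b • (eQ : WithTop Λ) ≤
            ν (f /ₘ Q * Q) := heQ ▸ hble
        exact absurd (lt_of_le_of_lt (c1.trans c2) (c3.trans_le (c4.trans hc)))
          (lt_irrefl _)
    have hdf : ν (hasseDeriv b f) = ν (hasseDeriv b (f /ₘ Q * Q)) := by
      conv_lhs => rw [← hfa]
      rw [map_add, add_comm]
      exact hν.v_add_eq hstep
    have d2 : (b • (ef : WithTop Λ)) < b • (eQ : WithTop Λ) := by
      refine nsmul_coe_lt_nsmul_coe (by omega) ?_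
      rw [hefeq, ← heQ, WithTop.coe_lt_coe] at hef
      exact hef
    have d3 : ν (hasseDeriv b f) + b • (ef : WithTop Λ) <
        ν (hasseDeriv b f) + b • (eQ : WithTop Λ) :=
      WithTop.add_lt_add_left (by rw [hdf]; exact hD) d2
    have d4 : ν (hasseDeriv b f) + b • (eQ : WithTop Λ) ≤ ν (f /ₘ Q * Q) := by
      rw [hdf]
      exact heQ ▸ hble
    exact absurd (lt_of_le_of_lt (hfineq b hb1) (d3.trans_le (d4.trans hmin)))
      (lt_irrefl _)
  refine ⟨?_, claim⟩
  conv_lhs => rw [← hfa]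
  exact hν.v_add_eq claim

end KeyPolPaper
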